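/- Let a < b be reals and let U_n be an (n+1)-dimensional subspace of C^n([a,b],ℝ). If {p_{n,0},…,p_{n,n}} and {r_{n,0},…,r_{n,n}} are two non-negative Bernstein bases of U_n, then for each k there exists a positive scalar λ_k > 0 with r_{n,k} = λ_k p_{n,k}. Consequently, U_n has at most one normalized Bernstein basis (a non-negative Bernstein basis whose members sum to the constant function 1). -/

import Mathlib

open Set Filter Topology

noncomputable section

/-- `p k`, `k = 0, …, n`, is a Bernstein basis of the `(n+1)`-dimensional subspace `U` of
`C^n([a,b], ℝ)`: it is a basis of `U` and each `p k` has a zero of order `k` at `a`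
(derivatives of order `< k` vanish at `a`, the `k`-th does not) and a zero of order
`n - k` at `b`. -/
def IsBernsteinBasisOf (a b : ℝ) (n : ℕ) (U : Submodule ℝ (ℝ → ℝ))
    (p : Fin (n + 1) → ℝ → ℝ) : Prop :=
  (∀ k, p k ∈ U) ∧ LinearIndependent ℝ p ∧ Submodule.span ℝ (Set.range p) = U ∧
  ∀ k : Fin (n + 1),
    (∀ j : ℕ, j < (k : ℕ) → iteratedDeriv j (p k) a = 0) ∧
    iteratedDeriv (k : ℕ) (p k) a ≠ 0 ∧
    (∀ j : ℕ, j < n - (k : ℕ) → iteratedDeriv j (p k) b = 0) ∧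
    iteratedDeriv (n - (k : ℕ)) (p k) b ≠ 0

/-- `q k`, `k = 0, …, n-1`, is a Bernstein basis of the `n`-dimensional space
`D_{f₀}U = { (f/f₀)' : f ∈ U }`: every `q k` lies in `D_{f₀}U`, every element of `D_{f₀}U`
lies in the span of the `q k`, the family is linearly independent, and each `q k` has a zero
of order `k` at `a` and a zero of order `n - 1 - k` at `b`. -/
def IsBernsteinBasisOfD (a b : ℝ) (n : ℕ) (f₀ : ℝ → ℝ) (U : Submodule ℝ (ℝ → ℝ))
    (q : Fin n → ℝ → ℝ) : Prop :=
  (∀ k, ∃ f ∈ U, q k = deriv (fun x => f x / f₀ x)) ∧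
  (∀ f ∈ U, deriv (fun x => f x / f₀ x) ∈ Submodule.span ℝ (Set.range q)) ∧
  LinearIndependent ℝ q ∧
  ∀ k : Fin n,
    (∀ j : ℕ, j < (k : ℕ) → iteratedDeriv j (q k) a = 0) ∧
    iteratedDeriv (k : ℕ) (q k) a ≠ 0 ∧
    (∀ j : ℕ, j < n - 1 - (k : ℕ) → iteratedDeriv j (q k) b = 0) ∧
    iteratedDeriv (n - 1 - (k : ℕ)) (q k) b ≠ 0

/-- Linearity of the `j`-th iterated derivative over finite linear combinations of
`C^j` functions. -/
lemma iteratedDeriv_finsum' {m j : ℕ} (c : Fin m → ℝ) (p : Fin m → ℝ → ℝ)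
    (hp : ∀ i, ContDiff ℝ (j : ℕ∞) (p i)) (x : ℝ) :
    iteratedDeriv j (fun y => ∑ i, c i * p i y) x = ∑ i, c i * iteratedDeriv j (p i) x := by
  have h1 : ∀ i : Fin m, ContDiff ℝ (j : ℕ∞) (c i • p i) :=
    fun i => ContDiff.const_smul (c i) (hp i)
  have e : (fun y => ∑ i, c i * p i y) = (∑ i ∈ Finset.univ, (c i • p i) ·) := by
    funext y; simp [smul_eq_mul]
  rw [e, iteratedDeriv_eq_iteratedFDeriv, iteratedFDeriv_sum (fun i _ => h1 i)]
  simp only [Finset.sum_apply, ContinuousMultilinearMap.sum_apply]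
  refine Finset.sum_congr rfl fun i _ => ?_
  rw [iteratedFDeriv_const_smul_apply (hp i).contDiffAt]
  simp [iteratedDeriv_eq_iteratedFDeriv, smul_eq_mul]

/-- If a `C^n` function vanishes on `[a, b]` then all its iterated derivatives of order
`≤ n` vanish on `[a, b]`. -/
lemma iteratedDeriv_eqOn_zero' {n j : ℕ} {f : ℝ → ℝ} {a b : ℝ} (hab : a < b)
    (hf : ContDiff ℝ (n : ℕ∞) f) (h0 : Set.EqOn f 0 (Set.Icc a b)) (hj : j ≤ n) :
    Set.EqOn (iteratedDeriv j f) 0 (Set.Icc a b) := by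
  induction j with
  | zero => simpa [iteratedDeriv_zero] using h0
  | succ j ih =>
    have ihj := ih (Nat.le_of_succ_le hj)
    have hIoo : Set.EqOn (iteratedDeriv (j + 1) f) 0 (Set.Ioo a b) := by
      intro x hx
      rw [iteratedDeriv_succ]
      have hev : iteratedDeriv j f =ᶠ[𝓝 x] fun _ => 0 := by
        filter_upwards [Ioo_mem_nhds hx.1 hx.2] with y hy using ihj (Ioo_subset_Icc_self hy)
      simp [hev.deriv_eq]
    have hcont : Continuous (iteratedDeriv (j + 1) f) :=
      hf.continuous_iteratedDeriv _ (by exact_mod_cast hj)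
    have := hIoo.closure hcont continuous_const
    rwa [closure_Ioo hab.ne] at this

/-- If a nonnegative `C^n` function on `[a,b]` has a nonvanishing `k`-th derivative at `a`,
then it is positive somewhere on `[a,b]`. -/
lemma exists_pos_point' {n k : ℕ} {a b : ℝ} (hk : k ≤ n) (hab : a < b) {f : ℝ → ℝ}
    (hf : ContDiff ℝ (n : ℕ∞) f) (hnn : ∀ x ∈ Set.Icc a b, 0 ≤ f x)
    (hnz : iteratedDeriv k f a ≠ 0) : ∃ x ∈ Set.Icc a b, 0 < f x := by
  by_contra h
  push_neg at h
  have h0 : Set.EqOn f 0 (Set.Icc a b) := fun x hx => le_antisymm (h x hx) (hnn x hx)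
  exact hnz (iteratedDeriv_eqOn_zero' hab hf h0 hk ⟨le_refl a, hab.le⟩)

/-- Coefficient extraction at the left endpoint, using vanishing orders at `a`. -/
lemma coeffs_zero_at_a' {n : ℕ} {a : ℝ} (p : Fin (n + 1) → ℝ → ℝ)
    (hs : ∀ i, ContDiff ℝ (n : ℕ∞) (p i))
    (hz : ∀ i : Fin (n + 1), ∀ j : ℕ, j < (i : ℕ) → iteratedDeriv j (p i) a = 0)
    (hnz : ∀ i : Fin (n + 1), iteratedDeriv (i : ℕ) (p i) a ≠ 0)
    (c : Fin (n + 1) → ℝ) {K : ℕ}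
    (h0 : ∀ j : ℕ, j < K → iteratedDeriv j (fun x => ∑ i, c i * p i x) a = 0) :
    ∀ j : Fin (n + 1), (j : ℕ) < K → c j = 0 := by
  have main : ∀ m : ℕ, ∀ j : Fin (n + 1), (j : ℕ) = m → m < K → c j = 0 := by
    intro m
    induction m using Nat.strong_induction_on with
    | _ m ih =>
      intro j hj hmK
      have hmn : m ≤ n := by have := j.isLt; omega
      have h2 : iteratedDeriv m (fun x => ∑ i, c i * p i x) a
          = ∑ i, c i * iteratedDeriv m (p i) a :=
        iteratedDeriv_finsum' c p (fun i => (hs i).of_le (by exact_mod_cast hmn)) a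
      rw [h0 m hmK] at h2
      rw [Finset.sum_eq_single j] at h2
      · have hne := hnz j
        rw [hj] at hne
        exact (mul_eq_zero.mp h2.symm).resolve_right hne
      · intro i _ hij
        have hvne : (i : ℕ) ≠ m := fun h => hij (Fin.ext (h.trans hj.symm))
        rcases lt_or_gt_of_ne hvne with h | h
        · rw [ih (i : ℕ) h i rfl (h.trans hmK), zero_mul]
        · rw [hz i m h, mul_zero]
      · intro h; exact absurd (Finset.mem_univ j) h
  intro j hj; exact main (j : ℕ) j rfl hj

/-- Coefficient extraction at the right endpoint, using vanishing orders at `b`. -/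
lemma coeffs_zero_at_b' {n : ℕ} {b : ℝ} (p : Fin (n + 1) → ℝ → ℝ)
    (hs : ∀ i, ContDiff ℝ (n : ℕ∞) (p i))
    (hz : ∀ i : Fin (n + 1), ∀ j : ℕ, j < n - (i : ℕ) → iteratedDeriv j (p i) b = 0)
    (hnz : ∀ i : Fin (n + 1), iteratedDeriv (n - (i : ℕ)) (p i) b ≠ 0)
    (c : Fin (n + 1) → ℝ) {K : ℕ}
    (h0 : ∀ j : ℕ, j < n - K → iteratedDeriv j (fun x => ∑ i, c i * p i x) b = 0) :
    ∀ j : Fin (n + 1), K < (j : ℕ) → c j = 0 := by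
  have main : ∀ m : ℕ, ∀ j : Fin (n + 1), n - (j : ℕ) = m → K < (j : ℕ) → c j = 0 := by
    intro m
    induction m using Nat.strong_induction_on with
    | _ m ih =>
      intro j hj hKj
      have hjn : (j : ℕ) ≤ n := by have := j.isLt; omega
      have hmK : m < n - K := by omega
      have hmn : m ≤ n := by omega
      have h2 : iteratedDeriv m (fun x => ∑ i, c i * p i x) b
          = ∑ i, c i * iteratedDeriv m (p i) b :=
        iteratedDeriv_finsum' c p (fun i => (hs i).of_le (by exact_mod_cast hmn)) b
      rw [h0 m hmK] at h2
      rw [Finset.sum_eq_single j] at h2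
      · have hne := hnz j
        rw [hj] at hne
        exact (mul_eq_zero.mp h2.symm).resolve_right hne
      · intro i _ hij
        have hvne : (i : ℕ) ≠ (j : ℕ) := fun h => hij (Fin.ext h)
        have hin : (i : ℕ) ≤ n := by have := i.isLt; omega
        rcases lt_or_gt_of_ne hvne with h | h
        · rw [hz i m (by omega), mul_zero]
        · rw [ih (n - (i : ℕ)) (by omega) i rfl (by omega), zero_mul]
      · intro h; exact absurd (Finset.mem_univ j) h
  intro j hj; exact main (n - (j : ℕ)) j rfl hj

/-- Non-negative Bernstein bases are unique up to multiplication by a positive scalar, and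
hence normalized Bernstein bases are unique. -/
theorem bernstein_basis_unique_up_to_scalar
    (n : ℕ) (a b : ℝ) (hab : a < b)
    (U : Submodule ℝ (ℝ → ℝ))
    (hUdim : Module.finrank ℝ ↥U = n + 1)
    (hUsmooth : ∀ f ∈ U, ContDiff ℝ (n : ℕ∞) f)
    (p r : Fin (n + 1) → ℝ → ℝ)
    (hp : IsBernsteinBasisOf a b n U p)
    (hpnn : ∀ k, ∀ x ∈ Set.Icc a b, 0 ≤ p k x)
    (hr : IsBernsteinBasisOf a b n U r)
    (hrnn : ∀ k, ∀ x ∈ Set.Icc a b, 0 ≤ r k x) :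
    (∀ k, ∃ lam : ℝ, 0 < lam ∧ r k = fun x => lam * p k x) ∧
    ((∀ x ∈ Set.Icc a b, ∑ k, p k x = 1) → (∀ x ∈ Set.Icc a b, ∑ k, r k x = 1) →
      ∀ k, ∀ x ∈ Set.Icc a b, r k x = p k x) := by
  obtain ⟨hpU, hpLI, hpSpan, hpcond⟩ := hp
  obtain ⟨hrU, hrLI, hrSpan, hrcond⟩ := hr
  have ps : ∀ i, ContDiff ℝ (n : ℕ∞) (p i) := fun i => hUsmooth _ (hpU i)
  have key : ∀ k : Fin (n + 1), ∃ lam : ℝ, 0 < lam ∧ r k = fun x => lam * p k x := by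
    intro k
    have hmem : r k ∈ Submodule.span ℝ (Set.range p) := by rw [hpSpan]; exact hrU k
    obtain ⟨c, hc⟩ := (Submodule.mem_span_range_iff_exists_fun ℝ).1 hmem
    have hre : r k = fun x => ∑ i, c i * p i x := by
      funext x
      rw [← hc]
      simp [Finset.sum_apply, smul_eq_mul]
    have h0a : ∀ j : ℕ, j < (k : ℕ) →
        iteratedDeriv j (fun x => ∑ i, c i * p i x) a = 0 := by
      intro j hj
      rw [show (fun x => ∑ i, c i * p i x) = r k from hre.symm]
      exact (hrcond k).1 j hj
    have h0b : ∀ j : ℕ, j < n - (k : ℕ) →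
        iteratedDeriv j (fun x => ∑ i, c i * p i x) b = 0 := by
      intro j hj
      rw [show (fun x => ∑ i, c i * p i x) = r k from hre.symm]
      exact (hrcond k).2.2.1 j hj
    have claimA := coeffs_zero_at_a' p ps (fun i => (hpcond i).1)
      (fun i => (hpcond i).2.1) c h0a
    have claimB := coeffs_zero_at_b' p ps (fun i => (hpcond i).2.2.1)
      (fun i => (hpcond i).2.2.2) c h0b
    have hrk : ∀ x, r k x = c k * p k x := by
      intro x
      have hx : r k x = ∑ i, c i * p i x := by rw [hre]
      rw [hx, Finset.sum_eq_single k]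
      · intro i _ hik
        have hvne : (i : ℕ) ≠ (k : ℕ) := fun h => hik (Fin.ext h)
        rcases lt_or_gt_of_ne hvne with h | h
        · rw [claimA i h, zero_mul]
        · rw [claimB i h, zero_mul]
      · intro h; exact absurd (Finset.mem_univ k) h
    have hck : c k ≠ 0 := by
      intro h
      apply hrLI.ne_zero k
      funext x
      simp [hrk x, h]
    obtain ⟨x0, hx0, hx0pos⟩ := exists_pos_point' (show (k : ℕ) ≤ n by
        have := k.isLt; omega) hab (ps k) (hpnn k) (hpcond k).2.1
    have hcknn : 0 ≤ c k := by
      have h1 := hrnn k x0 hx0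
      rw [hrk x0] at h1
      nlinarith
    exact ⟨c k, hcknn.lt_of_ne (Ne.symm hck), funext hrk⟩
  refine ⟨key, ?_⟩
  intro hps hrs
  choose lam hlampos hlam using key
  have gsm : ContDiff ℝ (n : ℕ∞) (fun x => ∑ i, (lam i - 1) * p i x) :=
    ContDiff.sum fun i _ => contDiff_const.mul (ps i)
  have g0 : Set.EqOn (fun x => ∑ i, (lam i - 1) * p i x) 0 (Set.Icc a b) := by
    intro x hx
    have h1 : ∑ i, r i x = ∑ i, lam i * p i x :=
      Finset.sum_congr rfl fun i _ => by rw [hlam i]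
    have h2 : (∑ i, (lam i - 1) * p i x) = (∑ i, lam i * p i x) - ∑ i, p i x := by
      rw [← Finset.sum_sub_distrib]
      exact Finset.sum_congr rfl fun i _ => by ring
    show (∑ i, (lam i - 1) * p i x) = 0
    rw [h2, ← h1, hrs x hx, hps x hx, sub_self]
  have h0a : ∀ j : ℕ, j < n + 1 →
      iteratedDeriv j (fun x => ∑ i, (lam i - 1) * p i x) a = 0 := by
    intro j hj
    exact iteratedDeriv_eqOn_zero' hab gsm g0 (by omega) ⟨le_refl a, hab.le⟩
  have hall := coeffs_zero_at_a' p ps (fun i => (hpcond i).1)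
    (fun i => (hpcond i).2.1) (fun i => lam i - 1) h0a
  intro k x hx
  have hlk : lam k = 1 := by
    have := hall k k.isLt
    simpa [sub_eq_zero] using this
  rw [hlam k]
  simp [hlk]
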